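/- arXiv:1108.6145 — 4 statements merged into one kernel-verified Lean document; each statement's English description precedes it below -/
import Mathlib

section
/- Let g : [0,∞) → (0,∞) be non-decreasing and satisfy the doubling condition g(2r) ≤ C₀ g(r) for all r ≥ 0, for some constant C₀ > 0. Then for every z ≥ 0 and every r > 0 one has V(z,r) ≤ 2 C₀ V(z, r/2). -/
open MeasureTheory Set

/-- Volume doubling for the weighted half-line `([0,∞), g dr)` (Lemma 4.1):
if `g` is non-decreasing, positive, and satisfies `g(2r) ≤ C₀ g(r)`, then
`V(z,r) ≤ 2 C₀ V(z, r/2)`, where `V(z,r) = ∫_{B(z,r)} g(s) ds` and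
`B(z,r) = (max{z-r,0}, z+r)`. -/
theorem volume_doubling (g : ℝ → ℝ) (C₀ : ℝ) (hC₀ : 0 < C₀)
    (hgpos : ∀ r : ℝ, 0 ≤ r → 0 < g r)
    (hgmono : ∀ a b : ℝ, 0 ≤ a → a ≤ b → g a ≤ g b)
    (hdbl : ∀ r : ℝ, 0 ≤ r → g (2 * r) ≤ C₀ * g r)
    (z : ℝ) (hz : 0 ≤ z) (r : ℝ) (hr : 0 < r) :
    (∫ s in Ioo (max (z - r) 0) (z + r), g s) ≤
      2 * C₀ * ∫ s in Ioo (max (z - r / 2) 0) (z + r / 2), g s := by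
  set a := max (z - r) 0 with ha
  set a' := max (z - r / 2) 0 with ha'
  set m := (a + z) / 2 with hm
  have ha0 : 0 ≤ a := le_max_right _ _
  have ha'0 : 0 ≤ a' := le_max_right _ _
  have hab : a ≤ z + r := max_le (by linarith) (by linarith)
  have haz : z - r ≤ a := le_max_left _ _
  have ha'm : a' ≤ m := max_le (by rw [hm]; linarith) (by rw [hm]; linarith)
  have hmb' : m ≤ z + r / 2 := by rw [hm]; linarith
  have h0m : 0 ≤ m := ha'0.trans ha'm
  -- key algebraic identities
  have hma : 2 * m - z = a := by rw [hm]; ring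
  have hmb : 2 * (z + r / 2) - z = z + r := by ring
  -- integrability
  have hint1 : IntervalIntegrable (fun x => g (2 * x - z)) volume m (z + r / 2) := by
    apply MonotoneOn.intervalIntegrable
    intro x hx y hy hxy
    rw [uIcc_of_le hmb'] at hx hy
    have hx0 : 0 ≤ 2 * x - z := by have := hx.1; rw [hm] at this; linarith [ha0]
    exact hgmono _ _ hx0 (by linarith)
  have hint2 : IntervalIntegrable g volume a' (z + r / 2) := by
    apply MonotoneOn.intervalIntegrable
    intro x hx y hy hxy
    rw [uIcc_of_le (ha'm.trans hmb')] at hx hy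
    exact hgmono _ _ (ha'0.trans hx.1) hxy
  have hsub : uIcc m (z + r / 2) ⊆ uIcc a' (z + r / 2) := by
    rw [uIcc_of_le hmb', uIcc_of_le (ha'm.trans hmb')]
    exact Icc_subset_Icc ha'm le_rfl
  have hint3 : IntervalIntegrable g volume m (z + r / 2) := hint2.mono_set hsub
  -- rewrite set integrals as interval integrals
  rw [← MeasureTheory.integral_Ioc_eq_integral_Ioo, ← MeasureTheory.integral_Ioc_eq_integral_Ioo,
    ← intervalIntegral.integral_of_le hab, ← intervalIntegral.integral_of_le (ha'm.trans hmb')]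
  -- change of variables
  have hsub2 : (∫ x in a..(z + r), g x) = 2 * ∫ x in m..(z + r / 2), g (2 * x - z) := by
    rw [intervalIntegral.integral_comp_mul_sub g two_ne_zero z, hma, hmb]
    rw [smul_eq_mul]
    ring
  rw [hsub2]
  have hstep : (∫ x in m..(z + r / 2), g (2 * x - z)) ≤ ∫ x in m..(z + r / 2), C₀ * g x := by
    apply intervalIntegral.integral_mono_on hmb' hint1 (hint3.const_mul C₀)
    intro x hx
    have hx0 : 0 ≤ 2 * x - z := by
      have := hx.1; rw [hm] at this; nlinarith [ha0]
    calc g (2 * x - z) ≤ g (2 * x) := hgmono _ _ hx0 (by linarith)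
    _ ≤ C₀ * g x := hdbl x (h0m.trans hx.1)
  have hstep2 : (∫ x in m..(z + r / 2), C₀ * g x) = C₀ * ∫ x in m..(z + r / 2), g x := by
    simp [intervalIntegral.integral_const_mul]
  have hstep3 : (∫ x in m..(z + r / 2), g x) ≤ ∫ x in a'..(z + r / 2), g x := by
    apply intervalIntegral.integral_mono_interval ha'm hmb' le_rfl _ hint2
    filter_upwards [MeasureTheory.ae_restrict_mem measurableSet_Ioc] with x hx
    exact (hgpos x (ha'0.trans hx.1.le)).le
  calc 2 * ∫ x in m..(z + r / 2), g (2 * x - z) ≤ 2 * (C₀ * ∫ x in m..(z + r / 2), g x) := by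
        rw [← hstep2]; linarith
  _ ≤ 2 * (C₀ * ∫ x in a'..(z + r / 2), g x) := by nlinarith
  _ = 2 * C₀ * ∫ x in a'..(z + r / 2), g x := by ring
end

section
/- Let g : [0,∞) → (0,∞) be non-decreasing. Then for every z ≥ 0, every r > 0, and every function f that is locally absolutely continuous on the closure of B(z,r) with derivative f′ satisfying ∫_{B(z,r)} |f′(s)|² g(s) ds < ∞, one has inf_{ξ∈ℝ} ∫_{B(z,r)} |f(s) − ξ|² g(s) ds ≤ 4 r² ∫_{B(z,r)} |f′(s)|² g(s) ds. -/
open MeasureTheory Set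

lemma cs_sq_integral {a b : ℝ} (hab : a ≤ b) {φ : ℝ → ℝ}
    (hm : AEStronglyMeasurable φ (volume.restrict (Ioc a b)))
    (hsq : IntegrableOn (fun t => φ t ^ 2) (Ioc a b)) :
    (∫ t in Ioc a b, φ t) ^ 2 ≤ (b - a) * ∫ t in Ioc a b, φ t ^ 2 := by
  set μ := volume.restrict (Ioc a b)
  have habs : AEStronglyMeasurable (fun t => |φ t|) μ := hm.norm
  have hsq' : Integrable (fun t => |φ t| ^ 2) μ := by
    simp only [sq_abs]; exact hsq
  have hmem : MemLp (fun t => |φ t|) (ENNReal.ofReal (2:ℝ)) μ := by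
    rw [show ENNReal.ofReal (2:ℝ) = 2 by norm_num]
    exact (memLp_two_iff_integrable_sq habs).mpr hsq'
  have hone : MemLp (fun _ : ℝ => (1:ℝ)) (ENNReal.ofReal (2:ℝ)) μ :=
    memLp_const 1
  have hpq : Real.HolderConjugate 2 2 := Real.HolderConjugate.two_two
  have h := integral_mul_le_Lp_mul_Lq_of_nonneg (μ := μ) hpq
    (Filter.Eventually.of_forall fun t => abs_nonneg (φ t))
    (Filter.Eventually.of_forall fun _ => zero_le_one) hmem hone
  simp only [mul_one, one_mul] at h
  have h1 : (∫ t, (1:ℝ) ^ (2:ℝ) ∂μ) = b - a := by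
    simp [μ, Real.volume_Ioc, ENNReal.toReal_ofReal (sub_nonneg.mpr hab), hab]
  have h2 : (∫ t, |φ t| ^ (2:ℝ) ∂μ) = ∫ t, φ t ^ 2 ∂μ := by
    congr 1; ext t
    rw [show ((2:ℝ)) = ((2:ℕ):ℝ) by norm_num, Real.rpow_natCast, sq_abs]
  rw [h1, h2] at h
  have hL : (∫ t, φ t ∂μ) ^ 2 ≤ (∫ t, |φ t| ∂μ) ^ 2 := by
    have := by simpa [Real.norm_eq_abs] using norm_integral_le_integral_norm (μ := μ) φ
    calc (∫ t, φ t ∂μ) ^ 2 = |∫ t, φ t ∂μ| ^ 2 := (sq_abs _).symm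
      _ ≤ (∫ t, |φ t| ∂μ) ^ 2 := by
          apply pow_le_pow_left₀ (abs_nonneg _) this
  have hInt2 : 0 ≤ ∫ t, φ t ^ 2 ∂μ := integral_nonneg fun t => sq_nonneg _
  calc (∫ t, φ t ∂μ) ^ 2 ≤ (∫ t, |φ t| ∂μ) ^ 2 := hL
    _ ≤ ((∫ t, φ t ^ 2 ∂μ) ^ (1/(2:ℝ)) * (b - a) ^ (1/(2:ℝ))) ^ 2 := by
        apply pow_le_pow_left₀ (integral_nonneg fun t => abs_nonneg _) h
    _ = (b - a) * ∫ t, φ t ^ 2 ∂μ := by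
        rw [mul_pow, ← Real.rpow_natCast ((∫ t, φ t ^ 2 ∂μ) ^ (1/(2:ℝ))) 2,
          ← Real.rpow_natCast ((b - a) ^ (1/(2:ℝ))) 2,
          ← Real.rpow_mul hInt2, ← Real.rpow_mul (sub_nonneg.mpr hab)]
        norm_num
        ring

/-- Poincaré inequality for the weighted half-line `([0,∞), g dr)` (Lemma 4.2):
for non-decreasing positive `g`, every ball `B(z,r) = (max{z-r,0}, z+r)` and every
locally absolutely continuous `f` on its closure with `∫_{B(z,r)} |f'|² g < ∞`, one has
`inf_ξ ∫_{B(z,r)} |f-ξ|² g ≤ 4 r² ∫_{B(z,r)} |f'|² g`. Local absolute continuity is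
expressed through the fundamental theorem of calculus with integrable derivative `f'`. -/
theorem poincare_inequality (g : ℝ → ℝ)
    (hgpos : ∀ r : ℝ, 0 ≤ r → 0 < g r)
    (hgmono : ∀ a b : ℝ, 0 ≤ a → a ≤ b → g a ≤ g b)
    (z : ℝ) (hz : 0 ≤ z) (r : ℝ) (hr : 0 < r)
    (f f' : ℝ → ℝ)
    (hf'int : IntegrableOn f' (Icc (max (z - r) 0) (z + r)))
    (hf : ∀ x ∈ Icc (max (z - r) 0) (z + r), ∀ y ∈ Icc (max (z - r) 0) (z + r),
      f y - f x = ∫ t in x..y, f' t)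
    (hfin : IntegrableOn (fun s => (f' s) ^ 2 * g s) (Ioo (max (z - r) 0) (z + r))) :
    (⨅ ξ : ℝ, ∫ s in Ioo (max (z - r) 0) (z + r), (f s - ξ) ^ 2 * g s) ≤
      4 * r ^ 2 * ∫ s in Ioo (max (z - r) 0) (z + r), (f' s) ^ 2 * g s := by
  set a := max (z - r) 0 with ha_def
  set b := z + r with hb_def
  have ha0 : (0:ℝ) ≤ a := le_max_right _ _
  have hab : a < b := max_lt (by linarith) (by linarith)
  have hba : b - a ≤ 2 * r := by
    have : z - r ≤ a := le_max_left _ _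
    linarith
  set I := ∫ s in Ioo a b, (f' s) ^ 2 * g s with hI_def
  have hgnn : ∀ s ∈ Ioo a b, 0 ≤ (f' s) ^ 2 * g s := fun s hs =>
    mul_nonneg (sq_nonneg _) (hgpos s (le_trans ha0 hs.1.le)).le
  have hI0 : 0 ≤ I := setIntegral_nonneg measurableSet_Ioo hgnn
  -- integrability of f'^2 on Ioo a b
  have hf'Ioo : IntegrableOn f' (Ioo a b) := hf'int.mono_set Ioo_subset_Icc_self
  have hf'sm : AEStronglyMeasurable f' (volume.restrict (Ioo a b)) :=
    hf'Ioo.aestronglyMeasurable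
  have hf'sqsm : AEStronglyMeasurable (fun t => f' t ^ 2) (volume.restrict (Ioo a b)) := by
    have := hf'sm.mul hf'sm
    simpa [sq, Pi.mul_def] using this
  have hga : 0 < g a := hgpos a ha0
  have hf'sqInt : IntegrableOn (fun t => f' t ^ 2) (Ioo a b) := by
    apply Integrable.mono' (hfin.const_mul (g a)⁻¹) hf'sqsm
    rw [ae_restrict_iff' measurableSet_Ioo]
    apply ae_of_all
    intro t ht
    rw [Real.norm_of_nonneg (sq_nonneg _)]
    have hgt : g a ≤ g t := hgmono a t ha0 ht.1.le
    have h1 : f' t ^ 2 * g a ≤ f' t ^ 2 * g t := by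
      exact mul_le_mul_of_nonneg_left hgt (sq_nonneg _)
    rw [inv_mul_eq_div, le_div_iff₀ hga]
    linarith
  -- pointwise bound
  have hpt : ∀ s ∈ Ioo a b, (f s - f b) ^ 2 * g s ≤ 2 * r * I := by
    intro s hs
    have hs0 : 0 ≤ s := le_trans ha0 hs.1.le
    have hsb : s ≤ b := hs.2.le
    have hsIcc : s ∈ Icc a b := ⟨hs.1.le, hs.2.le⟩
    have hbIcc : b ∈ Icc a b := ⟨hab.le, le_rfl⟩
    have hfs : f b - f s = ∫ t in Ioc s b, f' t := by
      rw [hf s hsIcc b hbIcc, intervalIntegral.integral_of_le hsb]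
    have hsqeq : (f s - f b) ^ 2 = (∫ t in Ioc s b, f' t) ^ 2 := by
      rw [← hfs]; ring
    -- integrabilities on Ioc s b
    have hsubIoo : Ioo s b ⊆ Ioo a b := Ioo_subset_Ioo hs.1.le le_rfl
    have hf'sqIoc : IntegrableOn (fun t => f' t ^ 2) (Ioc s b) :=
      (integrableOn_Ioc_iff_integrableOn_Ioo).mpr (hf'sqInt.mono_set hsubIoo)
    have hf'Ioc : AEStronglyMeasurable f' (volume.restrict (Ioc s b)) := by
      exact ((hf'int.mono_set (Ioc_subset_Icc_self.trans
        (Icc_subset_Icc hs.1.le le_rfl))).aestronglyMeasurable)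
    have hCS := cs_sq_integral hsb hf'Ioc hf'sqIoc
    -- weight comparison
    have hw : g s * ∫ t in Ioc s b, f' t ^ 2 ≤ ∫ t in Ioc s b, f' t ^ 2 * g t := by
      rw [← integral_const_mul]
      apply setIntegral_mono_on (hf'sqIoc.const_mul (g s)) _ measurableSet_Ioc
      · intro t ht
        have : g s ≤ g t := hgmono s t hs0 ht.1.le
        calc g s * f' t ^ 2 = f' t ^ 2 * g s := by ring
          _ ≤ f' t ^ 2 * g t := mul_le_mul_of_nonneg_left this (sq_nonneg _)
      · exact (integrableOn_Ioc_iff_integrableOn_Ioo).mpr (hfin.mono_set hsubIoo)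
    have hsubI : ∫ t in Ioc s b, f' t ^ 2 * g t ≤ I := by
      rw [integral_Ioc_eq_integral_Ioo, hI_def]
      apply setIntegral_mono_set hfin
      · filter_upwards [ae_restrict_mem measurableSet_Ioo] with t ht using hgnn t ht
      · exact HasSubset.Subset.eventuallyLE hsubIoo
    have hX0 : 0 ≤ ∫ t in Ioc s b, f' t ^ 2 :=
      setIntegral_nonneg measurableSet_Ioc fun t _ => sq_nonneg _
    have hgs : 0 < g s := hgpos s hs0
    calc (f s - f b) ^ 2 * g s = (∫ t in Ioc s b, f' t) ^ 2 * g s := by rw [hsqeq]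
      _ ≤ ((b - s) * ∫ t in Ioc s b, f' t ^ 2) * g s :=
          mul_le_mul_of_nonneg_right hCS hgs.le
      _ = (b - s) * (g s * ∫ t in Ioc s b, f' t ^ 2) := by ring
      _ ≤ (b - s) * ∫ t in Ioc s b, f' t ^ 2 * g t := by
          apply mul_le_mul_of_nonneg_left hw (by linarith [hs.2])
      _ ≤ 2 * r * I := by
          apply mul_le_mul (by linarith [hs.1, hba]) hsubI
          · exact setIntegral_nonneg measurableSet_Ioc fun t ht =>
              mul_nonneg (sq_nonneg _) (hgpos t (hs0.trans ht.1.le)).le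
          · linarith
  -- measurability of h
  have hFcont : ContinuousOn (fun x => ∫ t in Ioc a x, f' t) (Icc a b) :=
    intervalIntegral.continuousOn_primitive hf'int
  have hfsm : AEStronglyMeasurable f (volume.restrict (Ioo a b)) := by
    have hF : AEStronglyMeasurable (fun x => f a + ∫ t in Ioc a x, f' t)
        (volume.restrict (Ioo a b)) := by
      apply ContinuousOn.aestronglyMeasurable _ measurableSet_Ioo
      exact (continuousOn_const.add (hFcont.mono Ioo_subset_Icc_self))
    apply hF.congr
    rw [Filter.EventuallyEq, ae_restrict_iff' measurableSet_Ioo]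
    apply ae_of_all
    intro x hx
    have := hf a ⟨le_rfl, hab.le⟩ x ⟨hx.1.le, hx.2.le⟩
    rw [intervalIntegral.integral_of_le hx.1.le] at this
    linarith
  have hgsm : AEMeasurable g (volume.restrict (Ioo a b)) := by
    apply aemeasurable_restrict_of_monotoneOn measurableSet_Ioo
    intro x hx y hy hxy
    exact hgmono x y (ha0.trans hx.1.le) hxy
  have hhsm : AEStronglyMeasurable (fun s => (f s - f b) ^ 2 * g s)
      (volume.restrict (Ioo a b)) := by
    have h1 : AEStronglyMeasurable (fun s => (f s - f b) ^ 2)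
        (volume.restrict (Ioo a b)) := by
      have h0 : AEStronglyMeasurable (fun s => f s - f b) (volume.restrict (Ioo a b)) :=
        hfsm.sub aestronglyMeasurable_const
      have := h0.mul h0
      simpa [sq, Pi.mul_def] using this
    exact h1.mul hgsm.aestronglyMeasurable
  have hhint : IntegrableOn (fun s => (f s - f b) ^ 2 * g s) (Ioo a b) := by
    apply Integrable.mono' (integrable_const (2 * r * I)) hhsm
    rw [ae_restrict_iff' measurableSet_Ioo]
    apply ae_of_all
    intro s hs
    rw [Real.norm_of_nonneg (mul_nonneg (sq_nonneg _) (hgpos s (ha0.trans hs.1.le)).le)]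
    exact hpt s hs
  -- bound the integral at ξ = f b
  have hmain : ∫ s in Ioo a b, (f s - f b) ^ 2 * g s ≤ 4 * r ^ 2 * I := by
    calc ∫ s in Ioo a b, (f s - f b) ^ 2 * g s
        ≤ ∫ _s in Ioo a b, 2 * r * I := by
          apply setIntegral_mono_on hhint ((integrableOn_const_iff enorm_ne_top).mpr (Or.inr ?_))
            measurableSet_Ioo hpt
          rw [Real.volume_Ioo]; exact ENNReal.ofReal_lt_top
      _ = (b - a) * (2 * r * I) := by
          rw [setIntegral_const, measureReal_def, Real.volume_Ioo, smul_eq_mul,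
            ENNReal.toReal_ofReal (by linarith : (0:ℝ) ≤ b - a)]
      _ ≤ 4 * r ^ 2 * I := by
          have h1 : (b - a) * (2 * r * I) ≤ 2 * r * (2 * r * I) := by
            apply mul_le_mul_of_nonneg_right hba
            positivity
          nlinarith
  -- infimum
  have hbdd : BddBelow (Set.range fun ξ : ℝ => ∫ s in Ioo a b, (f s - ξ) ^ 2 * g s) := by
    refine ⟨0, ?_⟩
    rintro x ⟨ξ, rfl⟩
    exact setIntegral_nonneg measurableSet_Ioo fun s hs =>
      mul_nonneg (sq_nonneg _) (hgpos s (ha0.trans hs.1.le)).le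
  exact le_trans (ciInf_le hbdd (f b)) hmain
end

section
/- Let a < b be real numbers and let g : [a,b] → (0,∞) be non-decreasing. Then for every s ∈ [a,b] one has (∫_a^s g(t) dt) · (∫_s^b g(t)⁻¹ dt) ≤ (s − a)(b − s), and consequently sup_{a ≤ s ≤ b} (∫_a^s g(t) dt)(∫_s^b g(t)⁻¹ dt) ≤ ((b − a)/2)². -/
open MeasureTheory Set

/-- Estimate of the Muckenhoupt-type constant in the proof of Lemma 4.2:
for non-decreasing positive `g` on `[a,b]`, for every `s ∈ [a,b]` one has
`(∫_a^s g)(∫_s^b g⁻¹) ≤ (s-a)(b-s)`, and consequently the supremum over `s`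
is at most `((b-a)/2)²`. -/
theorem muckenhoupt_constant_estimate (a b : ℝ) (hab : a < b) (g : ℝ → ℝ)
    (hgpos : ∀ t ∈ Icc a b, 0 < g t)
    (hgmono : MonotoneOn g (Icc a b)) :
    (∀ s ∈ Icc a b, (∫ t in a..s, g t) * (∫ t in s..b, (g t)⁻¹) ≤ (s - a) * (b - s)) ∧
    (∀ s ∈ Icc a b, (∫ t in a..s, g t) * (∫ t in s..b, (g t)⁻¹) ≤ ((b - a) / 2) ^ 2) := by
  have key : ∀ s ∈ Icc a b,
      (∫ t in a..s, g t) * (∫ t in s..b, (g t)⁻¹) ≤ (s - a) * (b - s) := by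
    intro s hs
    obtain ⟨has, hsb⟩ := hs
    have hgs : 0 < g s := hgpos s ⟨has, hsb⟩
    have hsub1 : Icc a s ⊆ Icc a b := Icc_subset_Icc le_rfl hsb
    have hsub2 : Icc s b ⊆ Icc a b := Icc_subset_Icc has le_rfl
    have hmono1 : MonotoneOn g (uIcc a s) := by
      rw [uIcc_of_le has]; exact hgmono.mono hsub1
    have hanti : AntitoneOn (fun t => (g t)⁻¹) (uIcc s b) := by
      rw [uIcc_of_le hsb]
      intro x hx y hy hxy
      exact inv_anti₀ (hgpos x (hsub2 hx)) (hgmono (hsub2 hx) (hsub2 hy) hxy)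
    have hint1 : IntervalIntegrable g volume a s := hmono1.intervalIntegrable
    have hint2 : IntervalIntegrable (fun t => (g t)⁻¹) volume s b := hanti.intervalIntegrable
    have h1 : (∫ t in a..s, g t) ≤ (s - a) * g s := by
      calc (∫ t in a..s, g t) ≤ ∫ _ in a..s, g s := by
            apply intervalIntegral.integral_mono_on has hint1 intervalIntegrable_const
            intro t ht
            exact hgmono (hsub1 ht) ⟨has, hsb⟩ ht.2
        _ = (s - a) * g s := by simp [intervalIntegral.integral_const, smul_eq_mul]
    have h2 : (∫ t in s..b, (g t)⁻¹) ≤ (b - s) * (g s)⁻¹ := by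
      calc (∫ t in s..b, (g t)⁻¹) ≤ ∫ _ in s..b, (g s)⁻¹ := by
            apply intervalIntegral.integral_mono_on hsb hint2 intervalIntegrable_const
            intro t ht
            exact inv_anti₀ hgs (hgmono ⟨has, hsb⟩ (hsub2 ht) ht.1)
        _ = (b - s) * (g s)⁻¹ := by simp [intervalIntegral.integral_const, smul_eq_mul]
    have hnn1 : 0 ≤ ∫ t in a..s, g t := by
      apply intervalIntegral.integral_nonneg has
      intro t ht
      exact (hgpos t (hsub1 ht)).le
    have hnn2 : 0 ≤ ∫ t in s..b, (g t)⁻¹ :=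
      intervalIntegral.integral_nonneg hsb
        (fun t ht => inv_nonneg.mpr (hgpos t (hsub2 ht)).le)
    have hnn3 : 0 ≤ (s - a) * g s := mul_nonneg (by linarith) hgs.le
    calc (∫ t in a..s, g t) * (∫ t in s..b, (g t)⁻¹)
        ≤ ((s - a) * g s) * ((b - s) * (g s)⁻¹) := mul_le_mul h1 h2 hnn2 hnn3
      _ = (s - a) * (b - s) := by field_simp
  refine ⟨key, fun s hs => (key s hs).trans ?_⟩
  nlinarith [hs.1, hs.2, sq_nonneg (a + b - 2*s)]
end

section
/- Let C > 0 and α > 0, and define g(r) = exp(C r^α) for r ≥ 0. Then for every δ > 2 one has sup_{r>0} (∫₀^r g(s) ds)^{(δ−2)/δ} (∫_r^∞ g(s)⁻¹ ds) < ∞. -/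
open MeasureTheory Set

/-- Integrability of `exp (-(b * s^α))` on `(0,∞)` for `b, α > 0` (any `α`, via the
substitution `s = x^{1/α}` reducing to a Gamma-type integral). -/
lemma aux_integrableOn_exp_neg_rpow {b α : ℝ} (hb : 0 < b) (hα : 0 < α) :
    IntegrableOn (fun s : ℝ => Real.exp (-(b * s ^ α))) (Ioi (0:ℝ)) := by
  refine (integrableOn_Ioi_comp_rpow_iff' (fun s : ℝ => Real.exp (-(b * s ^ α)))
    (p := α⁻¹) (by positivity)).mp ?_
  have h := integrableOn_rpow_mul_exp_neg_mul_rpow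
    (p := 1) (s := α⁻¹ - 1) (b := b) (by linarith [inv_pos.mpr hα]) one_pos hb
  refine h.congr_fun (fun x hx => ?_) measurableSet_Ioi
  have hx0 : (0:ℝ) < x := hx
  have hxa : (x ^ α⁻¹ : ℝ) ^ α = x := by
    rw [← Real.rpow_mul hx0.le, inv_mul_cancel₀ hα.ne', Real.rpow_one]
  beta_reduce
  rw [smul_eq_mul, hxa, Real.rpow_one, neg_mul]

lemma aux_pow_exp (c y : ℝ) (hc : 0 < c) (hy : 0 ≤ y) (n : ℕ) :
    y ^ n * Real.exp (-(c * y)) ≤ n.factorial / c ^ n := by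
  have h1 : (c * y) ^ n / n.factorial ≤ Real.exp (c * y) := by
    refine le_trans ?_ (Real.sum_le_exp_of_nonneg (by positivity) (n + 1))
    exact Finset.single_le_sum (f := fun i => (c*y)^i / i.factorial)
      (fun i _ => by positivity) (Finset.self_mem_range_succ n)
  have h2 : (c * y) ^ n ≤ (n.factorial : ℝ) * Real.exp (c * y) := by
    rw [div_le_iff₀ (by positivity : (0:ℝ) < (n.factorial : ℝ))] at h1
    linarith [h1]
  have hexp : (0:ℝ) < Real.exp (c * y) := Real.exp_pos _
  rw [Real.exp_neg, mul_inv_le_iff₀ hexp, div_mul_eq_mul_div,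
    le_div_iff₀ (by positivity : (0:ℝ) < c ^ n)]
  calc y ^ n * c ^ n = (c * y) ^ n := by rw [mul_pow]; ring
    _ ≤ (n.factorial : ℝ) * Real.exp (c * y) := h2

/-- For the exponentially growing weight `g(r) = exp(C r^α)` with `C, α > 0`, the
Muckenhoupt-type quantity `sup_{r>0} (∫₀^r g)^{(δ-2)/δ} (∫_r^∞ g⁻¹)` is finite for
every `δ > 2` (hypothesis (2.6) of Theorem 2.5 holds for all `δ > 2`). -/
theorem muckenhoupt_finite_exponential (C α : ℝ) (hC : 0 < C) (hα : 0 < α)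
    (δ : ℝ) (hδ : 2 < δ) :
    ∃ M : ℝ, ∀ r : ℝ, 0 < r →
      (∫ s in Ioo (0:ℝ) r, Real.exp (C * s ^ α)) ^ ((δ - 2) / δ) *
        (∫ s in Ioi r, (Real.exp (C * s ^ α))⁻¹) ≤ M := by
  have hδ0 : (0:ℝ) < δ := by linarith
  set θ : ℝ := (δ - 2) / δ with hθdef
  have hθ0 : 0 < θ := div_pos (by linarith) hδ0
  have hθ1 : θ < 1 := (div_lt_one hδ0).mpr (by linarith)
  set ε : ℝ := (1 - θ) / 2 with hεdef
  have hε0 : 0 < ε := by rw [hεdef]; linarith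
  have hsum : θ + 2 * ε = 1 := by rw [hεdef]; ring
  have hεC : 0 < ε * C := mul_pos hε0 hC
  set n : ℕ := ⌈α⁻¹⌉₊ with hndef
  set J : ℝ := ∫ s in Ioi (0:ℝ), Real.exp (-(ε * C * s ^ α)) with hJdef
  have hJint : IntegrableOn (fun s : ℝ => Real.exp (-(ε * C * s ^ α))) (Ioi (0:ℝ)) :=
    aux_integrableOn_exp_neg_rpow hεC hα
  have hJ0 : 0 ≤ J :=
    setIntegral_nonneg measurableSet_Ioi fun x _ => (Real.exp_pos _).le
  set K : ℝ := 2 + (n.factorial : ℝ) / (ε * C) ^ n with hKdef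
  refine ⟨K * J, fun r hr => ?_⟩
  have hrα : (0:ℝ) < r ^ α := Real.rpow_pos_of_pos hr α
  have hcont : Continuous fun s : ℝ => Real.exp (C * s ^ α) := by
    rw [continuous_iff_continuousAt]
    intro x
    exact Real.continuous_exp.continuousAt.comp
      (continuousAt_const.mul (Real.continuousAt_rpow_const _ _ (Or.inr hα.le)))
  -- Bound on the first integral
  have hI1 : (∫ s in Ioo (0:ℝ) r, Real.exp (C * s ^ α)) ≤ r * Real.exp (C * r ^ α) := by
    have hb : ∀ x ∈ Ioo (0:ℝ) r, ‖Real.exp (C * x ^ α)‖ ≤ Real.exp (C * r ^ α) := by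
      intro x hx
      rw [Real.norm_eq_abs, abs_of_pos (Real.exp_pos _)]
      exact Real.exp_le_exp.mpr (mul_le_mul_of_nonneg_left
        (Real.rpow_le_rpow hx.1.le hx.2.le hα.le) hC.le)
    have hfin : volume (Ioo (0:ℝ) r) < ⊤ := by
      rw [Real.volume_Ioo]; exact ENNReal.ofReal_lt_top
    have := norm_setIntegral_le_of_norm_le_const hfin hb
    rw [measureReal_def, Real.volume_Ioo, ENNReal.toReal_ofReal (by linarith)] at this
    calc (∫ s in Ioo (0:ℝ) r, Real.exp (C * s ^ α))
        ≤ ‖∫ s in Ioo (0:ℝ) r, Real.exp (C * s ^ α)‖ := le_abs_self _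
      _ ≤ Real.exp (C * r ^ α) * (r - 0) := this
      _ = r * Real.exp (C * r ^ α) := by ring
  have hI1nn : 0 ≤ ∫ s in Ioo (0:ℝ) r, Real.exp (C * s ^ α) :=
    setIntegral_nonneg measurableSet_Ioo fun x _ => (Real.exp_pos _).le
  -- Rewrite the second integral
  have hEq2 : (∫ s in Ioi r, (Real.exp (C * s ^ α))⁻¹)
      = ∫ s in Ioi r, Real.exp (-(C * s ^ α)) := by
    simp_rw [← Real.exp_neg]
  have hintC : IntegrableOn (fun s : ℝ => Real.exp (-(C * s ^ α))) (Ioi r) :=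
    (aux_integrableOn_exp_neg_rpow hC hα).mono_set (Ioi_subset_Ioi hr.le)
  have hintε : IntegrableOn (fun s : ℝ => Real.exp (-(ε * C * s ^ α))) (Ioi r) :=
    hJint.mono_set (Ioi_subset_Ioi hr.le)
  -- Tail bound
  have hI2 : (∫ s in Ioi r, Real.exp (-(C * s ^ α)))
      ≤ Real.exp (-((1 - ε) * (C * r ^ α))) * J := by
    calc (∫ s in Ioi r, Real.exp (-(C * s ^ α)))
        ≤ ∫ s in Ioi r, Real.exp (-((1 - ε) * (C * r ^ α))) * Real.exp (-(ε * C * s ^ α)) := by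
          refine setIntegral_mono_on hintC (hintε.const_mul _) measurableSet_Ioi ?_
          intro s hs
          have hsr : r ^ α ≤ s ^ α := Real.rpow_le_rpow hr.le (le_of_lt hs) hα.le
          rw [← Real.exp_add]
          refine Real.exp_le_exp.mpr ?_
          have h1 : C * r ^ α ≤ C * s ^ α := mul_le_mul_of_nonneg_left hsr hC.le
          have h2 : ε * C * r ^ α ≤ ε * C * s ^ α := mul_le_mul_of_nonneg_left hsr hεC.le
          nlinarith [h1, h2]
      _ = Real.exp (-((1 - ε) * (C * r ^ α))) * ∫ s in Ioi r, Real.exp (-(ε * C * s ^ α)) :=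
          integral_const_mul _ _
      _ ≤ Real.exp (-((1 - ε) * (C * r ^ α))) * J := by
          refine mul_le_mul_of_nonneg_left ?_ (Real.exp_pos _).le
          exact setIntegral_mono_set hJint
            (Filter.Eventually.of_forall fun x => (Real.exp_pos _).le)
            ((Ioi_subset_Ioi hr.le).eventuallyLE)
  have hI2nn : 0 ≤ ∫ s in Ioi r, (Real.exp (C * s ^ α))⁻¹ :=
    setIntegral_nonneg measurableSet_Ioi fun x _ => by positivity
  -- Put everything together
  have hmain : (∫ s in Ioo (0:ℝ) r, Real.exp (C * s ^ α)) ^ θ *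
      (∫ s in Ioi r, (Real.exp (C * s ^ α))⁻¹)
      ≤ r ^ θ * Real.exp (-(ε * C * r ^ α)) * J := by
    calc (∫ s in Ioo (0:ℝ) r, Real.exp (C * s ^ α)) ^ θ *
        (∫ s in Ioi r, (Real.exp (C * s ^ α))⁻¹)
        ≤ (r * Real.exp (C * r ^ α)) ^ θ * (Real.exp (-((1 - ε) * (C * r ^ α))) * J) := by
          refine mul_le_mul (Real.rpow_le_rpow hI1nn hI1 hθ0.le) ?_ hI2nn (by positivity)
          rw [hEq2]; exact hI2
      _ = r ^ θ * (Real.exp ((C * r ^ α) * θ) * Real.exp (-((1 - ε) * (C * r ^ α)))) * J := by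
          rw [Real.mul_rpow hr.le (Real.exp_pos _).le, ← Real.exp_mul]
          ring
      _ = r ^ θ * Real.exp (-(ε * C * r ^ α)) * J := by
          rw [← Real.exp_add]
          have harg : C * r ^ α * θ + -((1 - ε) * (C * r ^ α)) = -(ε * C * r ^ α) := by
            linear_combination (C * r ^ α) * hsum
          rw [harg]
  refine hmain.trans ?_
  refine mul_le_mul_of_nonneg_right ?_ hJ0
  -- Show r ^ θ * exp (-(ε C r^α)) ≤ K
  have hexple : Real.exp (-(ε * C * r ^ α)) ≤ 1 := by
    rw [← Real.exp_zero]
    exact Real.exp_le_exp.mpr (neg_nonpos.mpr (by positivity))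
  have hrθ : r ^ θ ≤ 1 + r := by
    rcases le_total r 1 with h | h
    · have := Real.rpow_le_one hr.le h hθ0.le; linarith
    · have h2 := Real.rpow_le_rpow_of_exponent_le h hθ1.le
      rw [Real.rpow_one] at h2; linarith
  have hrexp : r * Real.exp (-(ε * C * r ^ α)) ≤ 1 + (n.factorial : ℝ) / (ε * C) ^ n := by
    rcases le_total r 1 with h | h
    · have : r * Real.exp (-(ε * C * r ^ α)) ≤ 1 := by nlinarith [(Real.exp_pos (-(ε * C * r ^ α))).le]
      have hpos : (0:ℝ) ≤ (n.factorial : ℝ) / (ε * C) ^ n := by positivity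
      linarith
    · have hαn : (1:ℝ) ≤ α * n := by
        have h1 : α⁻¹ ≤ (n : ℝ) := Nat.le_ceil _
        calc (1:ℝ) = α * α⁻¹ := (mul_inv_cancel₀ hα.ne').symm
          _ ≤ α * n := mul_le_mul_of_nonneg_left h1 hα.le
      have hrn : r ≤ (r ^ α) ^ n := by
        calc r = r ^ (1:ℝ) := (Real.rpow_one r).symm
          _ ≤ r ^ (α * n) := Real.rpow_le_rpow_of_exponent_le h hαn
          _ = (r ^ α) ^ (n:ℝ) := Real.rpow_mul hr.le α n
          _ = (r ^ α) ^ n := Real.rpow_natCast _ n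
      have := aux_pow_exp (ε * C) (r ^ α) hεC hrα.le n
      have hstep : r * Real.exp (-(ε * C * r ^ α))
          ≤ (r ^ α) ^ n * Real.exp (-(ε * C * r ^ α)) :=
        mul_le_mul_of_nonneg_right hrn (Real.exp_pos _).le
      have harg : ε * C * r ^ α = ε * C * (r ^ α) := by ring
      calc r * Real.exp (-(ε * C * r ^ α))
          ≤ (r ^ α) ^ n * Real.exp (-(ε * C * r ^ α)) := hstep
        _ = (r ^ α) ^ n * Real.exp (-(ε * C * (r ^ α))) := by rw [← harg]
        _ ≤ (n.factorial : ℝ) / (ε * C) ^ n := aux_pow_exp (ε * C) (r ^ α) hεC hrα.le n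
        _ ≤ 1 + (n.factorial : ℝ) / (ε * C) ^ n := by linarith
  calc r ^ θ * Real.exp (-(ε * C * r ^ α))
      ≤ (1 + r) * Real.exp (-(ε * C * r ^ α)) :=
        mul_le_mul_of_nonneg_right hrθ (Real.exp_pos _).le
    _ = Real.exp (-(ε * C * r ^ α)) + r * Real.exp (-(ε * C * r ^ α)) := by ring
    _ ≤ 1 + (1 + (n.factorial : ℝ) / (ε * C) ^ n) := add_le_add hexple hrexp
    _ = K := by rw [hKdef]; ring
end
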